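/- Let k ≥ 2, J > 0 and s : ZMod k → {−1,+1}, and let A be the k × k real matrix with A_{ii} = −2, A_{i, c(i)} = s_i J (where c(i) = i+1 mod k) and all other entries 0. Then a complex number z is an eigenvalue of A (viewed as a complex matrix) if and only if (z + 2)^k = (∏_{i} s_i) · J^k. Equivalently, the eigenvalues of A are exactly the numbers J ζ − 2 where ζ ranges over the complex k-th roots of ∏_i s_i. -/

import Mathlib

/-- The Jacobian matrix at `(1/2,…,1/2)` of the cyclic-interaction field:
`A_{ii} = −2`, `A_{i,i+1} = s_i J`, all other entries `0`. -/
noncomputable def cycA (k : ℕ) (J : ℝ) (s : ZMod k → ℝ) :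
    Matrix (ZMod k) (ZMod k) ℝ :=
  Matrix.of fun i j => if j = i then -2 else if j = i + 1 then s i * J else 0

private lemma range_prod_zmod (k : ℕ) [NeZero k] (f : ZMod k → ℂ) :
    ∏ m ∈ Finset.range k, f (m : ZMod k) = ∏ i : ZMod k, f i := by
  refine Finset.prod_nbij' (fun m => (m : ZMod k)) (fun i => i.val) ?_ ?_ ?_ ?_ ?_
  · intro a _; exact Finset.mem_univ _
  · intro a _; exact Finset.mem_range.2 (ZMod.val_lt a)
  · intro a ha; exact ZMod.val_natCast_of_lt (Finset.mem_range.1 ha)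
  · intro a _; exact ZMod.natCast_rightInverse a
  · intro a _; rfl

/-- A complex number `z` is an eigenvalue of `A` (viewed as a complex matrix)
if and only if `(z + 2)^k = (∏_i s_i) J^k`. -/
theorem statement9 (k : ℕ) [NeZero k] (hk : 2 ≤ k) (J : ℝ) (hJ : 0 < J)
    (s : ZMod k → ℝ) (hs : ∀ i, s i = 1 ∨ s i = -1) (z : ℂ) :
    Module.End.HasEigenvalue
      (Matrix.toLin' ((cycA k J s).map (fun a => (a : ℂ)))) z ↔
      (z + 2) ^ k = (((∏ i : ZMod k, s i) * J ^ k : ℝ) : ℂ) := by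
  haveI : Fact (1 < k) := ⟨hk⟩
  set r : ℂ := z + 2 with hr
  set c : ZMod k → ℂ := fun i => (s i : ℂ) * (J : ℂ) with hc
  have hcne : ∀ i, c i ≠ 0 := by
    intro i
    have : (s i : ℂ) ≠ 0 := by rcases hs i with h | h <;> simp [h]
    exact mul_ne_zero this (by exact_mod_cast hJ.ne')
  have hione : ∀ i : ZMod k, i + 1 ≠ i := by
    intro i h
    have : (1 : ZMod k) = 0 := by
      have h2 := congrArg (fun x => x - i) h
      simpa using h2
    exact one_ne_zero this
  -- the cast of the RHS
  have hC : (((∏ i : ZMod k, s i) * J ^ k : ℝ) : ℂ) = ∏ i : ZMod k, c i := by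
    rw [Finset.prod_mul_distrib]
    push_cast
    congr 1
    rw [Finset.prod_const, Finset.card_univ, ZMod.card]
  have hCne : (∏ i : ZMod k, c i) ≠ 0 := Finset.prod_ne_zero_iff.2 fun i _ => hcne i
  -- coordinatewise eigen-equation
  have key : ∀ v : ZMod k → ℂ,
      (Matrix.toLin' ((cycA k J s).map (fun a => (a : ℂ)))) v = z • v ↔
      ∀ i, c i * v (i + 1) = r * v i := by
    intro v
    rw [Matrix.toLin'_apply, funext_iff]
    have hmv : ∀ i, ((cycA k J s).map (fun a => (a : ℂ))).mulVec v i
        = -2 * v i + c i * v (i + 1) := by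
      intro i
      have hterm : ∀ j, ((cycA k J s).map (fun a => (a : ℂ))) i j * v j
          = (if j = i then (-2 : ℂ) * v j else 0)
            + (if j = i + 1 then c i * v j else 0) := by
        intro j
        simp only [cycA, Matrix.map_apply, Matrix.of_apply]
        by_cases h1 : j = i
        · subst h1
          simp [Ne.symm (hione j)]
        · by_cases h2 : j = i + 1 <;> simp [h1, h2, hc]
      calc ((cycA k J s).map (fun a => (a : ℂ))).mulVec v i
          = ∑ j, ((cycA k J s).map (fun a => (a : ℂ))) i j * v j := rfl
        _ = ∑ j, ((if j = i then (-2 : ℂ) * v j else 0)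
              + (if j = i + 1 then c i * v j else 0)) :=
            Finset.sum_congr rfl fun j _ => hterm j
        _ = -2 * v i + c i * v (i + 1) := by
            rw [Finset.sum_add_distrib, Finset.sum_ite_eq', Finset.sum_ite_eq']
            simp
    constructor
    · intro h i
      have := h i
      rw [hmv i, Pi.smul_apply, smul_eq_mul] at this
      rw [hr]; linear_combination this
    · intro h i
      rw [hmv i, Pi.smul_apply, smul_eq_mul]
      linear_combination (h i)
  constructor
  · -- eigenvalue ⇒ equation
    intro hev
    rw [Module.End.hasEigenvalue_iff, Submodule.ne_bot_iff] at hev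
    obtain ⟨v, hv, hvne⟩ := hev
    rw [Module.End.mem_eigenspace_iff, key v] at hv
    -- all coordinates nonzero
    have hvall : ∀ i, v i ≠ 0 := by
      intro i hvi
      apply hvne
      have hstep : ∀ n : ℕ, v (i + (n : ZMod k)) = 0 := by
        intro n
        induction n with
        | zero => simpa using hvi
        | succ n ih =>
          have := hv (i + (n : ZMod k))
          rw [ih, mul_zero] at this
          have h0 : v (i + (n : ZMod k) + 1) = 0 :=
            (mul_eq_zero.1 this).resolve_left (hcne _)
          rw [show (((n + 1 : ℕ)) : ZMod k) = (n : ZMod k) + 1 by push_cast; ring,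
            ← add_assoc]
          exact h0
      funext j
      have := hstep (j - i).val
      rwa [ZMod.natCast_rightInverse (j - i), add_sub_cancel] at this
    have hPv : (∏ i : ZMod k, v i) ≠ 0 := Finset.prod_ne_zero_iff.2 fun i _ => hvall i
    have hre : ∏ i : ZMod k, v (i + 1) = ∏ i : ZMod k, v i :=
      Equiv.prod_comp (Equiv.addRight (1 : ZMod k)) v
    have h1 : ∏ i : ZMod k, (c i * v (i + 1)) = (∏ i : ZMod k, c i) * ∏ i : ZMod k, v i := by
      rw [Finset.prod_mul_distrib, hre]
    have h2 : ∏ i : ZMod k, (r * v i) = r ^ k * ∏ i : ZMod k, v i := by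
      rw [Finset.prod_mul_distrib, Finset.prod_const, Finset.card_univ, ZMod.card]
    have hprod : ∏ i : ZMod k, (c i * v (i + 1)) = ∏ i : ZMod k, (r * v i) :=
      Finset.prod_congr rfl fun i _ => hv i
    have := mul_right_cancel₀ hPv ((h1.symm.trans hprod).trans h2)
    rw [hC]
    exact this.symm
  · -- equation ⇒ eigenvalue
    intro heq
    rw [hC] at heq
    have hrne : r ≠ 0 := by
      intro h0
      rw [h0, zero_pow (NeZero.ne k)] at heq
      exact hCne heq.symm
    set v : ZMod k → ℂ :=
      fun i => r ^ i.val * (∏ m ∈ Finset.range i.val, c (m : ZMod k))⁻¹ with hvdef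
    have hPne : ∀ n : ℕ, (∏ m ∈ Finset.range n, c (m : ZMod k)) ≠ 0 :=
      fun n => Finset.prod_ne_zero_iff.2 fun m _ => hcne _
    rw [Module.End.hasEigenvalue_iff, Submodule.ne_bot_iff]
    refine ⟨v, ?_, ?_⟩
    · rw [Module.End.mem_eigenspace_iff, key v]
      intro i
      set n := i.val with hn
      have hnk : n < k := ZMod.val_lt i
      have hi : ((n : ℕ) : ZMod k) = i := ZMod.natCast_rightInverse i
      have hvi : v i = r ^ n * (∏ m ∈ Finset.range n, c (m : ZMod k))⁻¹ := rfl
      rcases Nat.lt_or_ge (n + 1) k with hlt | hge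
      · -- n + 1 < k
        have hi1 : i + 1 = ((n + 1 : ℕ) : ZMod k) := by rw [← hi]; push_cast; ring
        have hv1 : (i + 1).val = n + 1 := by
          rw [hi1, ZMod.val_natCast_of_lt hlt]
        have hv1' : v (i + 1) = r ^ (n + 1) *
            ((∏ m ∈ Finset.range n, c (m : ZMod k)) * c i)⁻¹ := by
          rw [hvdef]
          simp only [hv1, Finset.prod_range_succ, hi]
        rw [hv1', hvi, mul_inv, pow_succ]
        have h1 := hcne i
        have h2 := hPne n
        field_simp
      · -- n + 1 = k, so i + 1 = 0
        have heqk : n + 1 = k := le_antisymm hnk hge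
        have hi1 : i + 1 = 0 := by
          rw [← hi]
          have h0 : ((n + 1 : ℕ) : ZMod k) = 0 := by rw [heqk]; exact ZMod.natCast_self k
          push_cast at h0 ⊢
          linear_combination h0
        have hv0 : v (i + 1) = 1 := by
          rw [hi1, hvdef]; simp [ZMod.val_zero]
        have hfull : (∏ m ∈ Finset.range n, c (m : ZMod k)) * c i
            = ∏ j : ZMod k, c j := by
          calc (∏ m ∈ Finset.range n, c (m : ZMod k)) * c i
              = ∏ m ∈ Finset.range (n + 1), c (m : ZMod k) := by
                rw [Finset.prod_range_succ, hi]
            _ = ∏ m ∈ Finset.range k, c (m : ZMod k) := by rw [heqk]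
            _ = ∏ j : ZMod k, c j := range_prod_zmod k c
        have hrk : r * r ^ n = ∏ j : ZMod k, c j := by
          rw [show r * r ^ n = r ^ (n + 1) by ring, heqk, heq]
        rw [hv0, hvi, mul_one, ← mul_assoc, hrk, ← hfull]
        rw [mul_comm (∏ m ∈ Finset.range n, c (m : ZMod k)) (c i), mul_assoc,
          mul_inv_cancel₀ (hPne n), mul_one]
    · intro h0
      have := congrFun h0 0
      rw [hvdef] at this
      simp [ZMod.val_zero] at this
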